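/- For every integer m, the power series A_m ∈ K[[t]] satisfies the functional equation A_m(q² t) − A_m(t) = q^{m+1} · t · A_m(q^{2m} t), i.e. for every d ≥ 1 the d-th coefficients satisfy (q^{2d} − 1)·a_d = q^{m+1}·q^{2m(d−1)}·a_{d−1}, where a_d = q^{m d² + d}·(∏_{i=1}^{d}(q^{2i} − 1))^{−1}. -/

import Mathlib

/-- The variable `q` of `K = ℚ(q)`, playing the role of `𝕃^{1/2}`. -/
noncomputable def q : RatFunc ℚ := RatFunc.X

/-- The `d`-th coefficient `q^{m d² + d} / ∏_{i=1}^{d} (q^{2i} - 1)` of the generating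
series of the stack of representations of the `m`-loop quiver. -/
noncomputable def a (m : ℤ) (d : ℕ) : RatFunc ℚ :=
  q ^ (m * (d : ℤ) ^ 2 + (d : ℤ)) * (∏ i ∈ Finset.Icc 1 d, (q ^ (2 * i) - 1))⁻¹

/-- The generating series `A_m(t) = Σ_d a_d t^d` of the `m`-loop quiver. -/
noncomputable def A (m : ℤ) : PowerSeries (RatFunc ℚ) := PowerSeries.mk (a m)

lemma q_ne_zero : q ≠ 0 := RatFunc.X_ne_zero

lemma q_pow_ne_one (n : ℕ) (hn : n ≠ 0) : q ^ n ≠ 1 := by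
  intro h
  have : (algebraMap (Polynomial ℚ) (RatFunc ℚ)) (Polynomial.X ^ n) =
      (algebraMap (Polynomial ℚ) (RatFunc ℚ)) 1 := by
    simpa [q, map_pow, RatFunc.algebraMap_X] using h
  have h2 := IsFractionRing.injective (Polynomial ℚ) (RatFunc ℚ) this
  have := congrArg Polynomial.natDegree h2
  simp [Polynomial.natDegree_X_pow] at this
  exact hn this

lemma factor_ne_zero (i : ℕ) (hi : 1 ≤ i) : q ^ (2 * i) - 1 ≠ 0 := by
  have := q_pow_ne_one (2 * i) (by omega)
  exact sub_ne_zero.mpr this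

lemma prod_ne_zero (d : ℕ) : (∏ i ∈ Finset.Icc 1 d, (q ^ (2 * i) - 1)) ≠ 0 := by
  rw [Finset.prod_ne_zero_iff]
  intro i hi
  exact factor_ne_zero i (Finset.mem_Icc.mp hi).1

lemma coeff_id (m : ℤ) (d : ℕ) (hd : 1 ≤ d) :
    (q ^ (2 * d) - 1) * a m d =
      q ^ (m + 1) * q ^ (2 * m * ((d : ℤ) - 1)) * a m (d - 1) := by
  obtain ⟨e, rfl⟩ : ∃ e, d = e + 1 := ⟨d - 1, by omega⟩
  simp only [a, Nat.add_sub_cancel]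
  rw [Finset.prod_Icc_succ_top (by omega : 1 ≤ e + 1)]
  have hP := prod_ne_zero e
  have hf := factor_ne_zero (e + 1) (by omega)
  have hq := q_ne_zero
  rw [mul_inv, ← mul_assoc]
  have hA : q ^ (m * ((e:ℤ)+1)^2 + ((e:ℤ)+1))
      = q ^ (m+1) * q ^ (2*m*(e:ℤ)) * q ^ (m*(e:ℤ)^2+(e:ℤ)) := by
    rw [← zpow_add₀ hq, ← zpow_add₀ hq]
    congr 1
    ring
  push_cast
  rw [hA]
  field_simp
  ring

/-- The functional equation `A_m(q² t) − A_m(t) = q^{m+1} · t · A_m(q^{2m} t)`,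
equivalently, `(q^{2d} − 1)·a_d = q^{m+1}·q^{2m(d−1)}·a_{d−1}` for all `d ≥ 1`. -/
theorem A_functional_equation (m : ℤ) :
    (PowerSeries.rescale (q ^ 2) (A m) - A m =
      PowerSeries.C (q ^ (m + 1)) * PowerSeries.X *
        PowerSeries.rescale (q ^ (2 * m)) (A m)) ∧
    (∀ d : ℕ, 1 ≤ d →
      (q ^ (2 * d) - 1) * a m d =
        q ^ (m + 1) * q ^ (2 * m * ((d : ℤ) - 1)) * a m (d - 1)) := by
  refine ⟨?_, fun d hd => coeff_id m d hd⟩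
  ext d
  rw [map_sub]
  rw [mul_comm (PowerSeries.C (q ^ (m + 1))) PowerSeries.X, mul_assoc]
  cases d with
  | zero =>
      simp [PowerSeries.coeff_rescale, A, PowerSeries.coeff_mk]
  | succ n =>
      rw [PowerSeries.coeff_succ_X_mul]
      simp only [PowerSeries.coeff_rescale, map_mul, PowerSeries.coeff_C_mul, A,
        PowerSeries.coeff_mk]
      have key := coeff_id m (n + 1) (by omega)
      have h1 : (q ^ 2) ^ (n + 1) = q ^ (2 * (n + 1)) := by
        rw [pow_mul]
      have h2 : (q ^ (2 * m)) ^ n = q ^ (2 * m * ((n : ℤ) + 1 - 1)) := by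
        rw [← zpow_natCast (q ^ (2 * m)) n, ← zpow_mul]
        norm_num
      rw [h1] at *
      rw [h2]
      have := key
      simp only [Nat.add_sub_cancel] at this
      push_cast at this ⊢
      linear_combination this
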